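/- (Strong positivity dichotomy for ground-state components.) Let u = (u₁, u₀, u₋₁) be a triple of nonnegative C² functions on D satisfying the Euler–Lagrange (Gross–Pitaevskii) system for some multipliers μ, λ ∈ ℝ. Then for each j ∈ {1, 0, −1}, either u_j ≡ 0 on D or u_j(x) > 0 for every x ∈ D. -/

import Mathlib

noncomputable section

open MeasureTheory

/-- Euclidean space `ℝ^d`. -/
abbrev Euc (d : ℕ) := EuclideanSpace ℝ (Fin d)

/-- The Laplacian of `f : ℝ^d → ℝ`: the sum of the pure second derivatives along the
standard coordinate directions. -/
def lap {d : ℕ} (f : Euc d → ℝ) (x : Euc d) : ℝ :=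
  ∑ i : Fin d, fderiv ℝ (fun y => fderiv ℝ f y (EuclideanSpace.single i 1)) x
    (EuclideanSpace.single i 1)

/-- The sign convention in the spin-exchange term: `+` when `c_s < 0`, `−` when `c_s > 0`
(for `c_s = 0` the spin term vanishes, so the choice is immaterial). -/
def spinSign (cs : ℝ) : ℝ := if cs < 0 then 1 else -1

/-- Total density `|u|² = u₁² + u₀² + u₋₁²`. -/
def rho {d : ℕ} (u1 u0 um1 : Euc d → ℝ) (x : Euc d) : ℝ :=
  (u1 x) ^ 2 + (u0 x) ^ 2 + (um1 x) ^ 2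

/-- Spin-exchange energy density `2u₀²(u₁ ± u₋₁)² + (u₁² − u₋₁²)²`. -/
def spinDen {d : ℕ} (cs : ℝ) (u1 u0 um1 : Euc d → ℝ) (x : Euc d) : ℝ :=
  2 * (u0 x) ^ 2 * (u1 x + spinSign cs * um1 x) ^ 2 + ((u1 x) ^ 2 - (um1 x) ^ 2) ^ 2

/-- Energy density of a triple `(u₁, u₀, u₋₁)`. -/
def eDen {d : ℕ} (V : Euc d → ℝ) (cn cs : ℝ) (u1 u0 um1 : Euc d → ℝ) (x : Euc d) : ℝ :=
  ‖gradient u1 x‖ ^ 2 + ‖gradient u0 x‖ ^ 2 + ‖gradient um1 x‖ ^ 2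
    + V x * rho u1 u0 um1 x + cn * (rho u1 u0 um1 x) ^ 2 + cs * spinDen cs u1 u0 um1 x

/-- The energy functional `𝔼[u]`. -/
def Energy {d : ℕ} (D : Set (Euc d)) (V : Euc d → ℝ) (cn cs : ℝ)
    (u1 u0 um1 : Euc d → ℝ) : ℝ :=
  ∫ x in D, eDen V cn cs u1 u0 um1 x

/-- The admissible class `𝒜`: triples of nonnegative C¹ functions on `D`, every term of the
energy integrable on `D`, total mass `N` and total magnetization `M`. -/
def Admissible {d : ℕ} (D : Set (Euc d)) (V : Euc d → ℝ) (cn cs N M : ℝ)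
    (u1 u0 um1 : Euc d → ℝ) : Prop :=
  (∀ x ∈ D, 0 ≤ u1 x) ∧ (∀ x ∈ D, 0 ≤ u0 x) ∧ (∀ x ∈ D, 0 ≤ um1 x) ∧
  ContDiffOn ℝ 1 u1 D ∧ ContDiffOn ℝ 1 u0 D ∧ ContDiffOn ℝ 1 um1 D ∧
  IntegrableOn (fun x => ‖gradient u1 x‖ ^ 2) D ∧
  IntegrableOn (fun x => ‖gradient u0 x‖ ^ 2) D ∧
  IntegrableOn (fun x => ‖gradient um1 x‖ ^ 2) D ∧
  IntegrableOn (fun x => V x * rho u1 u0 um1 x) D ∧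
  IntegrableOn (fun x => (rho u1 u0 um1 x) ^ 2) D ∧
  IntegrableOn (fun x => spinDen cs u1 u0 um1 x) D ∧
  (∫ x in D, rho u1 u0 um1 x) = N ∧
  (∫ x in D, ((u1 x) ^ 2 - (um1 x) ^ 2)) = M

/-- A ground state: an admissible triple minimizing the energy over `𝒜`. -/
def IsGroundState {d : ℕ} (D : Set (Euc d)) (V : Euc d → ℝ) (cn cs N M : ℝ)
    (u1 u0 um1 : Euc d → ℝ) : Prop :=
  Admissible D V cn cs N M u1 u0 um1 ∧
  ∀ v1 v0 vm1 : Euc d → ℝ, Admissible D V cn cs N M v1 v0 vm1 →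
    Energy D V cn cs u1 u0 um1 ≤ Energy D V cn cs v1 v0 vm1

/-- The Euler–Lagrange (coupled Gross–Pitaevskii) system with multipliers `μ`, `λ`. -/
def ELSystem {d : ℕ} (D : Set (Euc d)) (V : Euc d → ℝ) (cn cs mu lam : ℝ)
    (u1 u0 um1 : Euc d → ℝ) : Prop :=
  ∀ x ∈ D,
    (mu + lam) * u1 x =
      -lap u1 x + V x * u1 x + 2 * cn * rho u1 u0 um1 x * u1 x
        + 2 * cs * ((u0 x) ^ 2 * (u1 x + spinSign cs * um1 x)
            + u1 x * ((u1 x) ^ 2 - (um1 x) ^ 2)) ∧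
    mu * u0 x =
      -lap u0 x + V x * u0 x + 2 * cn * rho u1 u0 um1 x * u0 x
        + 2 * cs * (u0 x * (u1 x + spinSign cs * um1 x) ^ 2) ∧
    (mu - lam) * um1 x =
      -lap um1 x + V x * um1 x + 2 * cn * rho u1 u0 um1 x * um1 x
        + 2 * cs * ((u0 x) ^ 2 * (um1 x + spinSign cs * u1 x)
            + um1 x * ((um1 x) ^ 2 - (u1 x) ^ 2))

section Helpers
open Filter Topology Metric Set

lemma second_deriv_nonneg_of_isLocalMin {f f' : ℝ → ℝ} {b : ℝ}
    (hf : ∀ᶠ t in 𝓝 (0:ℝ), HasDerivAt f (f' t) t)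
    (hf' : HasDerivAt f' b 0) (hmin : IsLocalMin f 0) : 0 ≤ b := by
  by_contra hb
  push_neg at hb
  have hf0 : f' 0 = 0 := hmin.hasDerivAt_eq_zero hf.self_of_nhds
  have hslope : Tendsto (fun t => f' t / t) (𝓝[≠] (0:ℝ)) (𝓝 b) := by
    have h2 := hasDerivAt_iff_tendsto_slope.1 hf'
    simpa [slope_fun_def_field, hf0] using h2
  have hev : ∀ᶠ t in 𝓝[≠] (0:ℝ), f' t / t < b / 2 :=
    hslope.eventually_lt_const (by linarith)
  have hall : ∀ᶠ t in 𝓝[≠] (0:ℝ), HasDerivAt f (f' t) t ∧ f' t / t < b / 2 :=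
    ((hf.filter_mono nhdsWithin_le_nhds).and hev)
  rw [Metric.nhdsWithin_basis_ball.eventually_iff] at hall
  obtain ⟨δ, hδpos, hδ⟩ := hall
  -- on (0, δ/2], f' t < 0
  have key : ∀ t ∈ Set.Ioc (0:ℝ) (δ/2), HasDerivAt f (f' t) t ∧ f' t < 0 := by
    intro t ht
    have htd : dist t (0:ℝ) < δ := by
      rw [Real.dist_eq, sub_zero, abs_of_pos ht.1]; linarith [ht.2]
    have htne : t ∈ ({(0:ℝ)}ᶜ : Set ℝ) := by simp [ne_of_gt ht.1]
    obtain ⟨h1, h2⟩ := hδ ⟨Metric.mem_ball.mpr htd, htne⟩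
    refine ⟨h1, ?_⟩
    have : f' t < b / 2 * t := by
      have := (div_lt_iff₀ ht.1).1 h2
      linarith [this]
    nlinarith [ht.1]
  have hcont : ContinuousOn f (Set.Icc 0 (δ/2)) := by
    intro t ht
    rcases eq_or_lt_of_le ht.1 with h | h
    · subst h
      exact (hf.self_of_nhds.continuousAt).continuousWithinAt
    · exact ((key t ⟨h, ht.2⟩).1.continuousAt).continuousWithinAt
  have hanti : StrictAntiOn f (Set.Icc 0 (δ/2)) := by
    apply strictAntiOn_of_deriv_neg (convex_Icc _ _) hcont
    intro t ht
    rw [interior_Icc] at ht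
    have hk := key t ⟨ht.1, le_of_lt ht.2⟩
    rw [hk.1.deriv]; exact hk.2
  have hδ4 : (0:ℝ) < δ/4 := by linarith
  have hlt : f (δ/4) < f 0 :=
    hanti ⟨le_refl 0, by linarith⟩ ⟨by linarith, by linarith⟩ hδ4
  obtain ⟨ε, hεpos, hε⟩ := Metric.eventually_nhds_iff.mp hmin
  set t0 := min (δ/4) (ε/2) with ht0
  have ht0pos : 0 < t0 := lt_min hδ4 (by linarith)
  have h1 : f 0 ≤ f t0 := hε (by rw [Real.dist_eq, sub_zero, abs_of_pos ht0pos]; exact lt_of_le_of_lt (min_le_right _ _) (by linarith))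
  have h2 : f t0 < f 0 := by
    rcases eq_or_lt_of_le (min_le_left (δ/4) (ε/2)) with h | h
    · rw [ht0, h]; exact hlt
    · exact hanti ⟨le_refl 0, by linarith⟩ ⟨le_of_lt ht0pos, by linarith [min_le_left (δ/4) (ε/2)]⟩ ht0pos
  linarith


variable {d : ℕ}

lemma sum_sq_eq_dist (x p : Euc d) : ∑ j, (x j - p j)^2 = dist x p ^ 2 := by
  rw [dist_eq_norm, EuclideanSpace.norm_eq, Real.sq_sqrt (by positivity)]
  refine Finset.sum_congr rfl fun j _ => ?_
  rw [PiLp.sub_apply, Real.norm_eq_abs, sq_abs]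

lemma hg_hasFDerivAt (p : Euc d) (x : Euc d) :
    HasFDerivAt (fun y : Euc d => ∑ j, (y j - p j)^2)
      (∑ j, (2*(x j - p j)) • (EuclideanSpace.proj j : Euc d →L[ℝ] ℝ)) x := by
  apply HasFDerivAt.fun_sum
  intro j _
  have hproj : HasFDerivAt (fun y : Euc d => y j - p j)
      (EuclideanSpace.proj j : Euc d →L[ℝ] ℝ) x :=
    (EuclideanSpace.proj j : Euc d →L[ℝ] ℝ).hasFDerivAt.sub_const (p j)
  have h2 := hproj.fun_mul hproj
  have heq : (fun y : Euc d => (y j - p j)^2) = fun y => (y j - p j) * (y j - p j) := by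
    funext y; ring
  rw [heq]
  convert h2 using 1 <;> try rfl
  rw [two_mul, add_smul]

lemma barrier_hasFDerivAt (p : Euc d) (α : ℝ) (x : Euc d) :
    HasFDerivAt (fun y : Euc d => Real.exp (-α * ∑ j, (y j - p j)^2))
      ((Real.exp (-α * ∑ j, (x j - p j)^2) * (-α)) •
        (∑ j, (2*(x j - p j)) • (EuclideanSpace.proj j : Euc d →L[ℝ] ℝ))) x := by
  have hmul := (hg_hasFDerivAt p x).const_mul (-α)
  have := hmul.exp
  convert this using 1 <;> try rfl
  rw [smul_smul]

lemma sum_proj_apply (p x : Euc d) (i : Fin d) :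
    (∑ j, (2*(x j - p j)) • (EuclideanSpace.proj j : Euc d →L[ℝ] ℝ))
      (EuclideanSpace.single i 1) = 2*(x i - p i) := by
  rw [ContinuousLinearMap.sum_apply]
  have : ∀ j : Fin d, ((2*(x j - p j)) • (EuclideanSpace.proj j : Euc d →L[ℝ] ℝ))
      (EuclideanSpace.single i 1) = if j = i then 2*(x j - p j) else 0 := by
    intro j
    rw [ContinuousLinearMap.smul_apply, smul_eq_mul,
      show (EuclideanSpace.proj j : Euc d →L[ℝ] ℝ) (EuclideanSpace.single i 1)
        = (EuclideanSpace.single i (1:ℝ) : Euc d) j from rfl,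
      EuclideanSpace.single_apply]
    by_cases h : j = i <;> simp [h]
  rw [Finset.sum_congr rfl fun j _ => this j, Finset.sum_ite_eq']
  simp

lemma barrier_fderiv_apply (p : Euc d) (α : ℝ) (i : Fin d) (x : Euc d) :
    fderiv ℝ (fun y : Euc d => Real.exp (-α * ∑ j, (y j - p j)^2)) x
        (EuclideanSpace.single i 1)
      = (-2*α*(x i - p i)) * Real.exp (-α * ∑ j, (x j - p j)^2) := by
  rw [(barrier_hasFDerivAt p α x).fderiv, ContinuousLinearMap.smul_apply, sum_proj_apply,
    smul_eq_mul]
  ring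

lemma barrier_second (p : Euc d) (α : ℝ) (i : Fin d) (x : Euc d) :
    fderiv ℝ (fun y => fderiv ℝ (fun z : Euc d => Real.exp (-α * ∑ j, (z j - p j)^2)) y
        (EuclideanSpace.single i 1)) x (EuclideanSpace.single i 1)
      = Real.exp (-α * ∑ j, (x j - p j)^2) * (4*α^2*(x i - p i)^2 - 2*α) := by
  have hfun : (fun y => fderiv ℝ (fun z : Euc d => Real.exp (-α * ∑ j, (z j - p j)^2)) y
      (EuclideanSpace.single i 1))
      = fun y => (-2*α*(y i - p i)) * Real.exp (-α * ∑ j, (y j - p j)^2) :=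
    funext fun y => barrier_fderiv_apply p α i y
  rw [hfun]
  have h1 : HasFDerivAt (fun y : Euc d => -2*α*(y i - p i))
      ((-2*α) • (EuclideanSpace.proj i : Euc d →L[ℝ] ℝ)) x :=
    ((EuclideanSpace.proj i : Euc d →L[ℝ] ℝ).hasFDerivAt.sub_const (p i)).const_mul (-2*α)
  have h3 := h1.fun_mul (barrier_hasFDerivAt p α x)
  rw [h3.fderiv, ContinuousLinearMap.add_apply, ContinuousLinearMap.smul_apply,
    ContinuousLinearMap.smul_apply, ContinuousLinearMap.smul_apply,
    ContinuousLinearMap.smul_apply, sum_proj_apply,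
    show (EuclideanSpace.proj i : Euc d →L[ℝ] ℝ) (EuclideanSpace.single i 1)
      = (EuclideanSpace.single i (1:ℝ) : Euc d) i from rfl,
    show (EuclideanSpace.single i (1:ℝ) : Euc d) i = 1 by
      rw [EuclideanSpace.single_apply]; simp]
  simp only [smul_eq_mul]
  ring

lemma lap_barrier (p : Euc d) (α : ℝ) (x : Euc d) :
    lap (fun y : Euc d => Real.exp (-α * ∑ j, (y j - p j)^2)) x
      = Real.exp (-α * ∑ j, (x j - p j)^2) * (4*α^2*(∑ j, (x j - p j)^2) - 2*α*d) := by
  unfold lap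
  rw [Finset.sum_congr rfl fun i (_ : i ∈ Finset.univ) => barrier_second p α i x]
  rw [← Finset.mul_sum]
  congr 1
  rw [Finset.sum_sub_distrib, ← Finset.mul_sum, Finset.sum_const, Finset.card_fin,
    nsmul_eq_mul]
  ring

lemma barrier_fderiv_diff (p : Euc d) (α : ℝ) (i : Fin d) (x : Euc d) :
    DifferentiableAt ℝ
      (fun y => fderiv ℝ (fun z : Euc d => Real.exp (-α * ∑ j, (z j - p j)^2)) y
        (EuclideanSpace.single i 1)) x := by
  have hfun : (fun y => fderiv ℝ (fun z : Euc d => Real.exp (-α * ∑ j, (z j - p j)^2)) y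
      (EuclideanSpace.single i 1))
      = fun y => (-2*α*(y i - p i)) * Real.exp (-α * ∑ j, (y j - p j)^2) :=
    funext fun y => barrier_fderiv_apply p α i y
  rw [hfun]
  have h1 : HasFDerivAt (fun y : Euc d => -2*α*(y i - p i))
      ((-2*α) • (EuclideanSpace.proj i : Euc d →L[ℝ] ℝ)) x :=
    ((EuclideanSpace.proj i : Euc d →L[ℝ] ℝ).hasFDerivAt.sub_const (p i)).const_mul (-2*α)
  exact (h1.mul (barrier_hasFDerivAt p α x)).differentiableAt

lemma lap_w {U : Set (Euc d)} (hU : IsOpen U) {u : Euc d → ℝ}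
    (hu : ContDiffOn ℝ 2 u U) {x : Euc d} (hx : x ∈ U) (ε c0 α : ℝ) (p : Euc d) :
    lap (fun y => u y - ε * (Real.exp (-α * ∑ j, (y j - p j)^2) - c0)) x
      = lap u x - ε * lap (fun y : Euc d => Real.exp (-α * ∑ j, (y j - p j)^2)) x := by
  set E : Euc d → ℝ := fun y => Real.exp (-α * ∑ j, (y j - p j)^2) with hE
  have hEd : ∀ y : Euc d, DifferentiableAt ℝ E y :=
    fun y => (barrier_hasFDerivAt p α y).differentiableAt
  have step1 : ∀ y ∈ U, fderiv ℝ (fun z => u z - ε * (E z - c0)) y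
      = fderiv ℝ u y - ε • fderiv ℝ E y := by
    intro y hy
    have hu' : DifferentiableAt ℝ u y :=
      (hu.contDiffAt (hU.mem_nhds hy)).differentiableAt two_ne_zero
    have hEc : DifferentiableAt ℝ (fun z => E z - c0) y := (hEd y).sub_const c0
    rw [fderiv_fun_sub hu' (hEc.const_mul ε), fderiv_const_mul hEc, fderiv_sub_const]
  have hdu : ContDiffOn ℝ 1 (fderiv ℝ u) U :=
    hu.fderiv_of_isOpen hU le_rfl
  unfold lap
  have hterm : ∀ i : Fin d,
      fderiv ℝ (fun y => fderiv ℝ (fun z => u z - ε * (E z - c0)) y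
          (EuclideanSpace.single i 1)) x (EuclideanSpace.single i 1)
      = fderiv ℝ (fun y => fderiv ℝ u y (EuclideanSpace.single i 1)) x
          (EuclideanSpace.single i 1)
        - ε * fderiv ℝ (fun y => fderiv ℝ E y (EuclideanSpace.single i 1)) x
          (EuclideanSpace.single i 1) := by
    intro i
    have hev : (fun y => fderiv ℝ (fun z => u z - ε * (E z - c0)) y
        (EuclideanSpace.single i 1))
        =ᶠ[𝓝 x] fun y => fderiv ℝ u y (EuclideanSpace.single i 1)
          - ε * fderiv ℝ E y (EuclideanSpace.single i 1) := by
      filter_upwards [hU.mem_nhds hx] with y hy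
      rw [step1 y hy, ContinuousLinearMap.sub_apply, ContinuousLinearMap.smul_apply,
        smul_eq_mul]
    rw [hev.fderiv_eq]
    have hA : DifferentiableAt ℝ (fun y => fderiv ℝ u y (EuclideanSpace.single i 1)) x :=
      ((hdu.differentiableOn one_ne_zero).differentiableAt (hU.mem_nhds hx)).clm_apply
        (differentiableAt_const _)
    have hB : DifferentiableAt ℝ (fun y => fderiv ℝ E y (EuclideanSpace.single i 1)) x :=
      barrier_fderiv_diff p α i x
    rw [fderiv_fun_sub hA (hB.const_mul ε), fderiv_const_mul hB,
      ContinuousLinearMap.sub_apply, ContinuousLinearMap.smul_apply, smul_eq_mul]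
  rw [Finset.sum_congr rfl fun i _ => hterm i, Finset.sum_sub_distrib, ← Finset.mul_sum]

open EuclideanSpace in
lemma lap_nonneg_at_localmin {U : Set (Euc d)} (hU : IsOpen U) {w : Euc d → ℝ}
    (hw : ContDiffOn ℝ 2 w U) {y : Euc d} (hy : y ∈ U) (hmin : IsLocalMin w y) :
    0 ≤ lap w y := by
  have hterm : ∀ i : Fin d, 0 ≤ fderiv ℝ (fun z => fderiv ℝ w z (EuclideanSpace.single i 1))
      y (EuclideanSpace.single i 1) := by
    intro i
    set v : Euc d := EuclideanSpace.single i 1 with hv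
    set L : ℝ → Euc d := fun t => y + t • v with hLdef
    have hL : ∀ t : ℝ, HasDerivAt L v t := by
      intro t
      have h1 : HasDerivAt (fun s : ℝ => s • v) ((1:ℝ) • v) t :=
        (hasDerivAt_id t).smul_const v
      rw [one_smul] at h1; exact h1.const_add y
    have hL0 : L 0 = y := by simp [hLdef]
    have hLcont : Continuous L := by continuity
    have hLtend : Tendsto L (𝓝 0) (𝓝 y) := by
      have := hLcont.tendsto 0
      rwa [hL0] at this
    have hq : DifferentiableAt ℝ (fun z => fderiv ℝ w z v) y :=
      (((hw.fderiv_of_isOpen hU le_rfl).differentiableOn one_ne_zero).differentiableAt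
        (hU.mem_nhds hy)).clm_apply (differentiableAt_const _)
    set F : ℝ → ℝ := fun t => w (L t) with hF
    set F' : ℝ → ℝ := fun t => fderiv ℝ w (L t) v with hF'
    have hev : ∀ᶠ t in 𝓝 (0:ℝ), HasDerivAt F (F' t) t := by
      filter_upwards [hLtend.eventually (hU.mem_nhds hy)] with t ht
      have hwd : DifferentiableAt ℝ w (L t) :=
        (hw.contDiffAt (hU.mem_nhds ht)).differentiableAt two_ne_zero
      have := hwd.hasFDerivAt.comp_hasDerivAt t (hL t)
      exact this
    have hqL : HasFDerivAt (fun z => fderiv ℝ w z v)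
        (fderiv ℝ (fun z => fderiv ℝ w z v) y) (L 0) := by
      rw [hL0]; exact hq.hasFDerivAt
    have hb : HasDerivAt F' (fderiv ℝ (fun z => fderiv ℝ w z v) y v) 0 :=
      hqL.comp_hasDerivAt 0 (hL 0)
    have hminF : IsLocalMin F 0 :=
      IsMinFilter.comp_tendsto (show IsMinFilter w (𝓝 y) (L 0) by rwa [hL0]) hLtend
    exact second_deriv_nonneg_of_isLocalMin hev hb hminF
  exact Finset.sum_nonneg fun i _ => hterm i

lemma euc_nontrivial (hd : 1 ≤ d) : Nontrivial (Euc d) := by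
  refine ⟨0, EuclideanSpace.single ⟨0, hd⟩ 1, fun h => ?_⟩
  have h2 : (0 : Euc d) ⟨0, hd⟩ = EuclideanSpace.single (⟨0, hd⟩ : Fin d) (1:ℝ) ⟨0, hd⟩ := by
    rw [h]
  rw [EuclideanSpace.single_apply] at h2
  simp at h2

lemma barrier_contDiff (p : Euc d) (α : ℝ) :
    ContDiff ℝ 2 (fun y : Euc d => Real.exp (-α * ∑ j, (y j - p j)^2)) := by
  apply Real.contDiff_exp.comp
  apply ContDiff.mul contDiff_const
  apply ContDiff.sum
  intro j _
  exact ((EuclideanSpace.proj (𝕜 := ℝ) j).contDiff.sub contDiff_const).pow 2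

set_option maxHeartbeats 2000000 in
lemma smp (hd : 1 ≤ d) {D : Set (Euc d)} (hDopen : IsOpen D) (hDconn : IsConnected D)
    {u c : Euc d → ℝ} (hu : ContDiffOn ℝ 2 u D) (hposu : ∀ x ∈ D, 0 ≤ u x)
    (hc : ContinuousOn c D) (hc0 : ∀ x ∈ D, 0 ≤ c x)
    (hineq : ∀ x ∈ D, lap u x ≤ c x * u x) :
    (∀ x ∈ D, u x = 0) ∨ (∀ x ∈ D, 0 < u x) := by
  haveI := euc_nontrivial hd
  have ucont : ContinuousOn u D := hu.continuousOn
  -- Key claim: the zero set is open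
  have claim : ∀ z0 ∈ D, u z0 = 0 → ∃ δ > 0, ∀ x ∈ ball z0 δ, x ∈ D ∧ u x = 0 := by
    intro z0 hz0 huz0
    obtain ⟨ε, hεpos, hεball⟩ := Metric.isOpen_iff.1 hDopen z0 hz0
    set R := ε/2 with hR
    have hRpos : 0 < R := by positivity
    have hRD : closedBall z0 R ⊆ D := fun x hx =>
      hεball (lt_of_le_of_lt (mem_closedBall.1 hx) (by rw [hR]; linarith))
    by_contra hcon
    push_neg at hcon
    -- get a point p near z0 with u p > 0
    obtain ⟨p, hpball, hpne⟩ : ∃ p ∈ ball z0 (R/4), ¬(p ∈ D ∧ u p = 0) := by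
      obtain ⟨x, hx1, hx2⟩ := hcon (R/4) (by positivity)
      exact ⟨x, hx1, fun hand => hx2 hand.1 hand.2⟩
    have hpD : p ∈ D := hRD (closedBall_subset_closedBall (by linarith : R/4 ≤ R)
      (ball_subset_closedBall hpball))
    have hpu : 0 < u p := by
      rcases lt_or_eq_of_le (hposu p hpD) with h | h
      · exact h
      · exact absurd ⟨hpD, h.symm⟩ hpne
    -- the compact zero set near z0
    set K : Set (Euc d) := closedBall z0 (R/2) ∩ u ⁻¹' {0} with hK
    have hKsubD : closedBall z0 (R/2) ⊆ D :=
      fun x hx => hRD (closedBall_subset_closedBall (by linarith) hx)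
    have hKclosed : IsClosed K :=
      ContinuousOn.preimage_isClosed_of_isClosed (ucont.mono hKsubD)
        isClosed_closedBall isClosed_singleton
    have hKcpt : IsCompact K :=
      (isCompact_closedBall z0 (R/2)).of_isClosed_subset hKclosed inter_subset_left
    have hKz0 : z0 ∈ K := ⟨mem_closedBall_self (by linarith), by simp [huz0]⟩
    have hpK : p ∉ K := fun hk => hpu.ne' hk.2
    set r := Metric.infDist p K with hr
    have hrpos : 0 < r := (hKclosed.notMem_iff_infDist_pos ⟨z0, hKz0⟩).1 hpK
    have hrlt : r < R/4 :=
      lt_of_le_of_lt (Metric.infDist_le_dist_of_mem hKz0) (mem_ball.1 hpball)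
    obtain ⟨z, hzK, hzdist⟩ := hKcpt.exists_infDist_eq_dist ⟨z0, hKz0⟩ p
    have hzD : z ∈ D := hKsubD hzK.1
    have huz : u z = 0 := hzK.2
    have hdistpz : dist p z = r := hzdist.symm
    -- closedBall p r ⊆ closedBall z0 (R/2) ⊆ D
    have hpr_sub : closedBall p r ⊆ closedBall z0 (R/2) := by
      intro x hx
      have h1 : dist x p ≤ r := mem_closedBall.1 hx
      have h2 : dist p z0 < R/4 := mem_ball.1 hpball
      have := dist_triangle x p z0
      rw [mem_closedBall]
      linarith
    have hprD : closedBall p r ⊆ D := fun x hx => hKsubD (hpr_sub hx)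
    -- u > 0 on ball p r
    have hballpos : ∀ x ∈ ball p r, 0 < u x := by
      intro x hx
      have hxD : x ∈ D := hprD (ball_subset_closedBall hx)
      rcases lt_or_eq_of_le (hposu x hxD) with h | h
      · exact h
      · exfalso
        have hxK : x ∈ K := ⟨hpr_sub (ball_subset_closedBall hx), by simp [← h]⟩
        exact absurd (Metric.infDist_le_dist_of_mem hxK) (not_le.2 (mem_ball'.1 hx))
    -- the annulus
    set A : Set (Euc d) := closedBall p r \ ball p (r/2) with hA
    have hAsubD : A ⊆ D := fun x hx => hprD hx.1
    have hAcpt : IsCompact A := (isCompact_closedBall p r).diff isOpen_ball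
    have hzA : z ∈ A := by
      constructor
      · rw [mem_closedBall, dist_comm]; rw [hdistpz]
      · rw [mem_ball, dist_comm, hdistpz]; intro h; linarith
    -- bound for c on A
    obtain ⟨C, hC⟩ := hAcpt.exists_bound_of_continuousOn (hc.mono hAsubD)
    set C0 := max C 0 with hC0def
    have hC0nonneg : 0 ≤ C0 := le_max_right _ _
    have hC0 : ∀ x ∈ A, c x ≤ C0 :=
      fun x hx => le_trans (le_trans (le_abs_self _) (hC x hx)) (le_max_left _ _)
    -- choice of α
    set α := max 1 ((2*d + C0 + 1)/r^2) with hαdef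
    have hα1 : (1:ℝ) ≤ α := le_max_left _ _
    have hαpos : 0 < α := lt_of_lt_of_le one_pos hα1
    have hαr : 2*d + C0 + 1 ≤ α * r^2 := by
      have := le_max_right 1 ((2*d + C0 + 1)/r^2)
      rw [div_le_iff₀ (by positivity : (0:ℝ) < r^2)] at this
      linarith
    -- the barrier
    set E : Euc d → ℝ := fun y => Real.exp (-α * ∑ j, (y j - p j)^2) with hEdef
    have hEdist : ∀ x : Euc d, E x = Real.exp (-α * dist x p ^ 2) := by
      intro x; rw [hEdef]; simp only; rw [sum_sq_eq_dist]
    have hEpos : ∀ x : Euc d, 0 < E x := fun x => Real.exp_pos _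
    -- min of u on inner sphere
    have hSsub : sphere p (r/2) ⊆ ball p r := fun x hx => by
      rw [mem_ball, (mem_sphere.1 hx)]; linarith
    have hSne : (sphere p (r/2)).Nonempty := NormedSpace.sphere_nonempty.2 (by linarith)
    obtain ⟨xm, hxmS, hxmmin⟩ := (isCompact_sphere p (r/2)).exists_isMinOn hSne
      (ucont.mono (fun x hx => hprD (ball_subset_closedBall (hSsub hx))))
    set m := u xm with hm
    have hmpos : 0 < m := hballpos xm (hSsub hxmS)
    set h0val : ℝ := Real.exp (-α * (r/2)^2) - Real.exp (-α * r^2) with hh0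
    have hh0pos : 0 < h0val := by
      rw [hh0, sub_pos]
      apply Real.exp_lt_exp.2
      nlinarith
    set ε0 := m / h0val with hε0
    have hε0pos : 0 < ε0 := div_pos hmpos hh0pos
    set w : Euc d → ℝ := fun y => u y - ε0 * (E y - Real.exp (-α * r^2)) with hwdef
    -- continuity of w on A
    have hEcd : ContDiff ℝ 2 E := barrier_contDiff p α
    have hwcont : ContinuousOn w A := by
      apply ContinuousOn.sub (ucont.mono hAsubD)
      exact (continuous_const.mul (hEcd.continuous.sub continuous_const)).continuousOn
    have hwcd : ContDiffOn ℝ 2 w D := by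
      apply ContDiffOn.sub hu
      exact (ContDiff.mul contDiff_const (hEcd.sub contDiff_const)).contDiffOn
    -- weak maximum principle on the annulus A
    have hwA : ∀ x ∈ A, 0 ≤ w x := by
      by_contra hcon2
      push_neg at hcon2
      obtain ⟨xb, hxbA, hxbneg⟩ := hcon2
      obtain ⟨y0, hy0A, hy0min⟩ := hAcpt.exists_isMinOn ⟨xb, hxbA⟩ hwcont
      have hy0neg : w y0 < 0 := lt_of_le_of_lt (hy0min hxbA) hxbneg
      have hy0D : y0 ∈ D := hAsubD hy0A
      -- y0 is in the open annulus
      have hy0lt : dist y0 p < r := by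
        rcases lt_or_eq_of_le (mem_closedBall.1 hy0A.1) with h | h
        · exact h
        · exfalso
          have : E y0 = Real.exp (-α * r^2) := by rw [hEdist, h]
          have hw0 : w y0 = u y0 := by rw [hwdef]; simp [this]
          rw [hw0] at hy0neg
          exact absurd (hposu y0 hy0D) (not_le.2 hy0neg)
      have hy0gt : r/2 < dist y0 p := by
        rcases lt_or_eq_of_le (not_lt.1 (fun h => hy0A.2 (mem_ball.2 h))) with h | h
        · exact h
        · exfalso
          have hy0S : y0 ∈ sphere p (r/2) := mem_sphere.2 h.symm
          have h1 : m ≤ u y0 := hxmmin hy0S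
          have h2 : E y0 = Real.exp (-α * (r/2)^2) := by rw [hEdist, h.symm]
          have : w y0 = u y0 - ε0 * h0val := by rw [hwdef]; simp only; rw [h2, hh0]
          rw [this, hε0, div_mul_cancel₀ _ (ne_of_gt hh0pos)] at hy0neg
          linarith
      -- y0 is an interior local min
      set O : Set (Euc d) := ball p r \ closedBall p (r/2) with hO
      have hOopen : IsOpen O := isOpen_ball.sdiff isClosed_closedBall
      have hy0O : y0 ∈ O := ⟨mem_ball.2 hy0lt, fun h => absurd (mem_closedBall.1 h)
        (not_le.2 hy0gt)⟩
      have hOA : O ⊆ A := fun x hx => ⟨ball_subset_closedBall hx.1,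
        fun h => hx.2 (ball_subset_closedBall h)⟩
      have hlocmin : IsLocalMin w y0 :=
        (hy0min.on_subset hOA).isLocalMin (hOopen.mem_nhds hy0O)
      have hlapw : 0 ≤ lap w y0 := lap_nonneg_at_localmin hDopen hwcd hy0D hlocmin
      have hlapw_eq : lap w y0 = lap u y0 - ε0 * lap E y0 :=
        lap_w hDopen hu hy0D ε0 (Real.exp (-α * r^2)) α p
      have hlapE : lap E y0 = E y0 * (4*α^2*(∑ j, (y0 j - p j)^2) - 2*α*d) :=
        lap_barrier p α y0
      have hgy0 : (∑ j, (y0 j - p j)^2) = dist y0 p ^ 2 := sum_sq_eq_dist y0 p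
      -- lower bound on lap E y0
      have hg_lb : r^2/4 < ∑ j, (y0 j - p j)^2 := by
        rw [hgy0]
        nlinarith [hy0gt, hrpos]
      have hg_ub : ∑ j, (y0 j - p j)^2 ≤ r^2 := by
        rw [hgy0]; nlinarith [hy0lt, dist_nonneg (x := y0) (y := p)]
      have hlapE_lb : E y0 * (C0 + 1) ≤ lap E y0 := by
        rw [hlapE]
        have h1 : C0 + 1 ≤ 4*α^2*(∑ j, (y0 j - p j)^2) - 2*α*d := by
          have h2 : α * r^2 - 2*d ≥ C0 + 1 := by linarith
          nlinarith [hg_lb, hαpos, hα1]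
        nlinarith [hEpos y0]
      -- c y0 bounds
      have hcy0 : c y0 ≤ C0 := hC0 y0 hy0A
      have hcy0nn : 0 ≤ c y0 := hc0 y0 hy0D
      have hhy0nn : 0 ≤ E y0 - Real.exp (-α * r^2) := by
        rw [hEdist, sub_nonneg]
        apply Real.exp_le_exp.2
        nlinarith [hy0lt, dist_nonneg (x := y0) (y := p)]
      have hhy0le : E y0 - Real.exp (-α * r^2) ≤ E y0 :=
        sub_le_self _ (le_of_lt (Real.exp_pos _))
      -- combine
      have hlapu : lap u y0 ≤ c y0 * u y0 := hineq y0 hy0D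
      have huy0 : u y0 = w y0 + ε0 * (E y0 - Real.exp (-α * r^2)) := by rw [hwdef]; ring
      have hfinal : lap w y0 < 0 := by
        rw [hlapw_eq]
        have hcu : c y0 * u y0 ≤ ε0 * (C0 * E y0) := by
          rw [huy0]
          have h1 : c y0 * w y0 ≤ 0 := mul_nonpos_of_nonneg_of_nonpos hcy0nn (le_of_lt hy0neg)
          have h2 : c y0 * (E y0 - Real.exp (-α * r^2)) ≤ C0 * E y0 := by
            calc c y0 * (E y0 - Real.exp (-α * r^2)) ≤ C0 * (E y0 - Real.exp (-α * r^2)) :=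
                  mul_le_mul_of_nonneg_right hcy0 hhy0nn
            _ ≤ C0 * E y0 := mul_le_mul_of_nonneg_left hhy0le hC0nonneg
          nlinarith [hε0pos]
        have h3 : ε0 * (E y0 * (C0 + 1)) ≤ ε0 * lap E y0 :=
          mul_le_mul_of_nonneg_left hlapE_lb (le_of_lt hε0pos)
        have h4 : lap u y0 ≤ ε0 * (C0 * E y0) := le_trans hlapu hcu
        nlinarith [hEpos y0, hε0pos]
      linarith
    -- Hopf boundary argument at z
    exfalso
    have hzmin : IsLocalMin u z := by
      have : ∀ᶠ x in 𝓝 z, u z ≤ u x := by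
        filter_upwards [hDopen.mem_nhds hzD] with x hx
        rw [huz]; exact hposu x hx
      exact this
    have hfz : fderiv ℝ u z = 0 := hzmin.fderiv_eq_zero
    set v0 : Euc d := p - z with hv0
    have hnv0 : ‖v0‖ = r := by
      rw [hv0, ← dist_eq_norm, hdistpz]
    set L : ℝ → Euc d := fun t => z + t • v0 with hLdef
    have hL : ∀ t : ℝ, HasDerivAt L v0 t := by
      intro t
      have h1 : HasDerivAt (fun s : ℝ => s • v0) ((1:ℝ) • v0) t :=
        (hasDerivAt_id t).smul_const v0
      rw [one_smul] at h1; exact h1.const_add z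
    have hLA : ∀ t ∈ Icc (0:ℝ) (1/2), L t ∈ A ∧ dist (L t) p = (1-t) * r := by
      intro t ht
      have hdist : dist (L t) p = (1-t) * r := by
        rw [dist_eq_norm]
        have : L t - p = (1-t) • (z - p) := by
          rw [hLdef]; simp only; rw [hv0]; module
        rw [this, norm_smul, Real.norm_eq_abs, abs_of_nonneg (by linarith [ht.2] : (0:ℝ) ≤ 1-t)]
        rw [← neg_sub p z, norm_neg, ← dist_eq_norm, hdistpz]
      refine ⟨⟨?_, ?_⟩, hdist⟩
      · rw [mem_closedBall, hdist]
        nlinarith [ht.1, hrpos]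
      · rw [mem_ball, hdist]
        intro hcontra
        nlinarith [ht.2, hrpos]
    -- the inequality along the segment
    have hseg : ∀ t ∈ Icc (0:ℝ) (1/2),
        ε0 * (Real.exp (-α * ((1-t)^2 * r^2)) - Real.exp (-α * r^2)) ≤ u (L t) := by
      intro t ht
      obtain ⟨hLA1, hLA2⟩ := hLA t ht
      have := hwA (L t) hLA1
      rw [hwdef] at this
      simp only at this
      have hE : E (L t) = Real.exp (-α * ((1-t)^2 * r^2)) := by
        rw [hEdist, hLA2]
        congr 2
        ring
      rw [hE] at this
      linarith
    -- derivative of u along segment at 0 is 0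
    have hL0 : L 0 = z := by simp [hLdef]
    have hφ : HasDerivAt (fun t => u (L t)) 0 0 := by
      have hud : DifferentiableAt ℝ u z :=
        (hu.contDiffAt (hDopen.mem_nhds hzD)).differentiableAt two_ne_zero
      have hudL : HasFDerivAt u (fderiv ℝ u z) (L 0) := by rw [hL0]; exact hud.hasFDerivAt
      have := hudL.comp_hasDerivAt 0 (hL 0)
      rwa [hfz, ContinuousLinearMap.zero_apply] at this
    -- derivative of the lower bound at 0 is positive
    set ψ : ℝ → ℝ := fun t => ε0 * (Real.exp (-α * ((1-t)^2 * r^2)) - Real.exp (-α * r^2))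
      with hψdef
    have hψ : HasDerivAt ψ (ε0 * (2*α*r^2 * Real.exp (-α * r^2))) 0 := by
      have h1 : HasDerivAt (fun t : ℝ => 1 - t) (-1) 0 := by
        simpa using (hasDerivAt_id (0:ℝ)).const_sub 1
      have h2 : HasDerivAt (fun t : ℝ => (1-t)^2) (-2) 0 := by
        have := h1.mul h1
        have heq : (fun t : ℝ => (1-t)^2) = fun t => (1-t)*(1-t) := by funext t; ring
        rw [heq]
        convert this using 1 <;> try rfl
        norm_num
      have h3 : HasDerivAt (fun t : ℝ => -α * ((1-t)^2 * r^2)) (2*α*r^2) 0 := by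
        have := (h2.mul_const (r^2)).const_mul (-α)
        convert this using 1 <;> try rfl
        ring
      have h4 := h3.exp
      have h5 := (h4.sub_const (Real.exp (-α * r^2))).const_mul ε0
      convert h5 using 1 <;> try rfl
      norm_num
      left; ring
    -- contradiction via slopes
    have hslopeφ : Tendsto (fun t => u (L t) / t) (𝓝[>] (0:ℝ)) (𝓝 0) := by
      have := hasDerivAt_iff_tendsto_slope.1 hφ
      have h2 : Tendsto (slope (fun t => u (L t)) 0) (𝓝[>] (0:ℝ)) (𝓝 0) :=
        this.mono_left (nhdsWithin_mono 0 (fun t ht => ne_of_gt ht))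
      have heq : (fun t => u (L t) / t) =ᶠ[𝓝[>] (0:ℝ)] slope (fun t => u (L t)) 0 := by
        filter_upwards with t
        rw [slope_def_field, hL0, huz, sub_zero, sub_zero]
      exact h2.congr' heq.symm
    have hslopeψ : Tendsto (fun t => ψ t / t) (𝓝[>] (0:ℝ))
        (𝓝 (ε0 * (2*α*r^2 * Real.exp (-α * r^2)))) := by
      have := hasDerivAt_iff_tendsto_slope.1 hψ
      have h2 := this.mono_left (nhdsWithin_mono 0 (fun t (ht : t ∈ Ioi (0:ℝ)) => ne_of_gt ht))
      have heq : (fun t => ψ t / t) =ᶠ[𝓝[>] (0:ℝ)] slope ψ 0 := by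
        filter_upwards with t
        rw [slope_def_field, sub_zero]
        have : ψ 0 = 0 := by rw [hψdef]; norm_num
        rw [this, sub_zero]
      exact h2.congr' heq.symm
    have hev : ∀ᶠ t in 𝓝[>] (0:ℝ), ψ t / t ≤ u (L t) / t := by
      have hIoc : Ioc (0:ℝ) (1/2) ∈ 𝓝[>] (0:ℝ) := Ioc_mem_nhdsGT (by norm_num)
      filter_upwards [hIoc] with t ht
      exact div_le_div_of_nonneg_right (hseg t ⟨le_of_lt ht.1, ht.2⟩) (le_of_lt ht.1)
    have hle : ε0 * (2*α*r^2 * Real.exp (-α * r^2)) ≤ 0 :=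
      le_of_tendsto_of_tendsto hslopeψ hslopeφ hev
    have hprod : 0 < ε0 * (2*α*r^2 * Real.exp (-α * r^2)) :=
      mul_pos hε0pos (mul_pos (by positivity) (Real.exp_pos _))
    linarith
  -- conclude via connectedness
  by_cases hzero : ∀ x ∈ D, u x = 0
  · exact Or.inl hzero
  · right
    by_contra hcon
    push_neg at hcon
    obtain ⟨b, hbD, hbu⟩ := hcon
    have hbu0 : u b = 0 := le_antisymm hbu (hposu b hbD)
    push_neg at hzero
    obtain ⟨a, haD, hau⟩ := hzero
    have hau0 : 0 < u a := lt_of_le_of_ne (hposu a haD) (Ne.symm hau)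
    set U1 : Set (Euc d) := {x | x ∈ D ∧ 0 < u x} with hU1def
    set U0 : Set (Euc d) := {x | x ∈ D ∧ u x = 0} with hU0def
    have hU1open : IsOpen U1 := by
      rw [isOpen_iff_mem_nhds]
      rintro x ⟨hxD, hxu⟩
      have hca : ContinuousAt u x := ucont.continuousAt (hDopen.mem_nhds hxD)
      filter_upwards [hDopen.mem_nhds hxD, hca.preimage_mem_nhds (Ioi_mem_nhds hxu)]
        with y h1 h2
      exact ⟨h1, h2⟩
    have hU0open : IsOpen U0 := by
      rw [isOpen_iff_mem_nhds]
      rintro x ⟨hxD, hxu⟩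
      obtain ⟨δ, hδpos, hδ⟩ := claim x hxD hxu
      rw [_root_.mem_nhds_iff]
      exact ⟨ball x δ, fun y hy => ⟨(hδ y hy).1, (hδ y hy).2⟩, isOpen_ball,
        mem_ball_self hδpos⟩
    have hmeet := hDconn.isPreconnected U1 U0 hU1open hU0open
      (fun x hx => by
        rcases lt_or_eq_of_le (hposu x hx) with h | h
        · exact Or.inl ⟨hx, h⟩
        · exact Or.inr ⟨hx, h.symm⟩)
      ⟨a, haD, haD, hau0⟩ ⟨b, hbD, hbD, hbu0⟩
    obtain ⟨x, -, hx1, hx0⟩ := hmeet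
    exact absurd hx0.2 (ne_of_gt hx1.2)

end Helpers

/-- Strong positivity dichotomy: each component of a nonnegative C² solution of the
Euler–Lagrange (Gross–Pitaevskii) system on a nonempty open connected `D` is either
identically zero, or strictly positive everywhere on `D`. -/
theorem ground_state_component_dichotomy {d : ℕ} (hd : 1 ≤ d)
    (D : Set (Euc d)) (hDopen : IsOpen D) (hDne : D.Nonempty) (hDconn : IsConnected D)
    (V : Euc d → ℝ) (hV : ContinuousOn V D)
    (cn cs N M : ℝ) (hN : 0 < N) (hM : |M| < N)
    (u1 u0 um1 : Euc d → ℝ)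
    (h1 : ∀ x ∈ D, 0 ≤ u1 x) (h0 : ∀ x ∈ D, 0 ≤ u0 x) (hm1 : ∀ x ∈ D, 0 ≤ um1 x)
    (hC1 : ContDiffOn ℝ 2 u1 D) (hC0 : ContDiffOn ℝ 2 u0 D) (hCm1 : ContDiffOn ℝ 2 um1 D)
    (mu lam : ℝ) (hEL : ELSystem D V cn cs mu lam u1 u0 um1) :
    ((∀ x ∈ D, u1 x = 0) ∨ (∀ x ∈ D, 0 < u1 x)) ∧
    ((∀ x ∈ D, u0 x = 0) ∨ (∀ x ∈ D, 0 < u0 x)) ∧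
    ((∀ x ∈ D, um1 x = 0) ∨ (∀ x ∈ D, 0 < um1 x)) := by
  have hcontu1 : ContinuousOn u1 D := hC1.continuousOn
  have hcontu0 : ContinuousOn u0 D := hC0.continuousOn
  have hcontum1 : ContinuousOn um1 D := hCm1.continuousOn
  have hrhoc : ContinuousOn (fun x => rho u1 u0 um1 x) D := by
    show ContinuousOn (fun x => (u1 x)^2 + (u0 x)^2 + (um1 x)^2) D
    exact ((hcontu1.pow 2).add (hcontu0.pow 2)).add (hcontum1.pow 2)
  have hsign : cs * spinSign cs ≤ 0 := by
    unfold spinSign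
    split_ifs with h
    · nlinarith
    · push_neg at h; nlinarith
  refine ⟨?_, ?_, ?_⟩
  · -- component u1
    set c1 : Euc d → ℝ := fun x =>
      max (V x - (mu+lam) + 2*cn*rho u1 u0 um1 x
        + 2*cs*((u0 x)^2 + ((u1 x)^2 - (um1 x)^2))) 0 with hc1def
    have hc1cont : ContinuousOn c1 D := by
      apply ContinuousOn.sup _ continuousOn_const
      exact ((hV.sub continuousOn_const).add (continuousOn_const.mul hrhoc)).add
        (continuousOn_const.mul ((hcontu0.pow 2).add ((hcontu1.pow 2).sub (hcontum1.pow 2))))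
    have hineq1 : ∀ x ∈ D, lap u1 x ≤ c1 x * u1 x := by
      intro x hx
      have h := (hEL x hx).1
      have heq : lap u1 x = (V x - (mu+lam) + 2*cn*rho u1 u0 um1 x
          + 2*cs*((u0 x)^2 + ((u1 x)^2 - (um1 x)^2))) * u1 x
          + 2*(cs*spinSign cs)*((u0 x)^2*(um1 x)) := by linear_combination h
      rw [heq]
      have h2 : 2*(cs*spinSign cs)*((u0 x)^2*(um1 x)) ≤ 0 := by
        have hnn : 0 ≤ (u0 x)^2*(um1 x) := mul_nonneg (sq_nonneg _) (hm1 x hx)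
        nlinarith
      have h3 : (V x - (mu+lam) + 2*cn*rho u1 u0 um1 x
          + 2*cs*((u0 x)^2 + ((u1 x)^2 - (um1 x)^2))) * u1 x ≤ c1 x * u1 x :=
        mul_le_mul_of_nonneg_right (le_max_left _ _) (h1 x hx)
      linarith
    exact smp hd hDopen hDconn hC1 h1 hc1cont (fun x _ => le_max_right _ _) hineq1
  · -- component u0
    set c0f : Euc d → ℝ := fun x =>
      max (V x - mu + 2*cn*rho u1 u0 um1 x + 2*cs*(u1 x + spinSign cs * um1 x)^2) 0
      with hc0def
    have hc0cont : ContinuousOn c0f D := by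
      apply ContinuousOn.sup _ continuousOn_const
      exact ((hV.sub continuousOn_const).add (continuousOn_const.mul hrhoc)).add
        (continuousOn_const.mul
          ((hcontu1.add (continuousOn_const.mul hcontum1)).pow 2))
    have hineq0 : ∀ x ∈ D, lap u0 x ≤ c0f x * u0 x := by
      intro x hx
      have h := (hEL x hx).2.1
      have heq : lap u0 x = (V x - mu + 2*cn*rho u1 u0 um1 x
          + 2*cs*(u1 x + spinSign cs * um1 x)^2) * u0 x := by linear_combination h
      rw [heq]
      exact mul_le_mul_of_nonneg_right (le_max_left _ _) (h0 x hx)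
    exact smp hd hDopen hDconn hC0 h0 hc0cont (fun x _ => le_max_right _ _) hineq0
  · -- component um1
    set cm1 : Euc d → ℝ := fun x =>
      max (V x - (mu-lam) + 2*cn*rho u1 u0 um1 x
        + 2*cs*((u0 x)^2 + ((um1 x)^2 - (u1 x)^2))) 0 with hcm1def
    have hcm1cont : ContinuousOn cm1 D := by
      apply ContinuousOn.sup _ continuousOn_const
      exact ((hV.sub continuousOn_const).add (continuousOn_const.mul hrhoc)).add
        (continuousOn_const.mul ((hcontu0.pow 2).add ((hcontum1.pow 2).sub (hcontu1.pow 2))))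
    have hineqm1 : ∀ x ∈ D, lap um1 x ≤ cm1 x * um1 x := by
      intro x hx
      have h := (hEL x hx).2.2
      have heq : lap um1 x = (V x - (mu-lam) + 2*cn*rho u1 u0 um1 x
          + 2*cs*((u0 x)^2 + ((um1 x)^2 - (u1 x)^2))) * um1 x
          + 2*(cs*spinSign cs)*((u0 x)^2*(u1 x)) := by linear_combination h
      rw [heq]
      have h2 : 2*(cs*spinSign cs)*((u0 x)^2*(u1 x)) ≤ 0 := by
        have hnn : 0 ≤ (u0 x)^2*(u1 x) := mul_nonneg (sq_nonneg _) (h1 x hx)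
        nlinarith
      have h3 : (V x - (mu-lam) + 2*cn*rho u1 u0 um1 x
          + 2*cs*((u0 x)^2 + ((um1 x)^2 - (u1 x)^2))) * um1 x ≤ cm1 x * um1 x :=
        mul_le_mul_of_nonneg_right (le_max_left _ _) (hm1 x hx)
      linarith
    exact smp hd hDopen hDconn hCm1 hm1 hcm1cont (fun x _ => le_max_right _ _) hineqm1
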